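/- Let S be a set of n points in the plane in convex position. Then there exists a 4-connected biplane graph on S if and only if n ≥ 6. -/

import Mathlib

/-- A point in the plane. -/
abbrev Pt : Type := ℝ × ℝ

/-- A finite point set is in *general position* if no three of its points are collinear. -/
def InGenPos (S : Set Pt) : Prop :=
  ∀ p ∈ S, ∀ q ∈ S, ∀ r ∈ S, p ≠ q → p ≠ r → q ≠ r → ¬ Collinear ℝ ({p, q, r} : Set Pt)

/-- A point set is in *convex position* if no point lies in the convex hull of the others. -/
def InConvexPos (S : Set Pt) : Prop :=
  ∀ p ∈ S, p ∉ convexHull ℝ (S \ {p})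

/-- `E` is a set of unordered pairs of distinct points of `S`. -/
def IsEdgeSetOn (S : Set Pt) (E : Set (Sym2 Pt)) : Prop :=
  ∀ e ∈ E, ¬ e.IsDiag ∧ ∀ p ∈ e, p ∈ S

/-- The open segment spanned by an unordered pair of points. -/
def openSeg : Sym2 Pt → Set Pt :=
  Sym2.lift ⟨fun a b => openSegment ℝ a b, fun a b => openSegment_symm ℝ a b⟩

/-- Two edges *cross* if their open segments intersect. -/
def Cross (e f : Sym2 Pt) : Prop := (openSeg e ∩ openSeg f).Nonempty

/-- A *plane graph* on `S`: a geometric graph whose edges are pairwise noncrossing. -/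
def IsPlaneGraph (S : Set Pt) (E : Set (Sym2 Pt)) : Prop :=
  IsEdgeSetOn S E ∧ ∀ e ∈ E, ∀ f ∈ E, e ≠ f → ¬ Cross e f

/-- A *biplane graph* on `S`: the edge set splits into two plane graphs. -/
def IsBiplaneGraph (S : Set Pt) (E : Set (Sym2 Pt)) : Prop :=
  IsEdgeSetOn S E ∧ ∃ E₁ E₂ : Set (Sym2 Pt), E = E₁ ∪ E₂ ∧
    IsPlaneGraph S E₁ ∧ IsPlaneGraph S E₂

/-- The geometric graph `(S, E)` is `k`-connected: more than `k` vertices, and deleting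
any fewer than `k` vertices leaves a connected graph. -/
def KConnected (k : ℕ) (S : Set Pt) (E : Set (Sym2 Pt)) : Prop :=
  k < S.ncard ∧ ∀ C ⊆ S, C.ncard < k →
    ((SimpleGraph.fromEdgeSet E).induce (S \ C)).Connected

/-- A *triangulation* of `S`: an edge-maximal plane graph on `S`. -/
def IsTriangulation (S : Set Pt) (E : Set (Sym2 Pt)) : Prop :=
  IsPlaneGraph S E ∧ ∀ p ∈ S, ∀ q ∈ S, p ≠ q → s(p, q) ∉ E →
    ¬ IsPlaneGraph S (insert s(p, q) E)

/-- `{u,v}` is a *hull edge* of `S`: all other points of `S` lie strictly on one side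
of the line through `u` and `v`. -/
def IsHullEdge (S : Set Pt) (u v : Pt) : Prop :=
  u ≠ v ∧ ((∀ p ∈ S \ {u, v},
      0 < (v.1 - u.1) * (p.2 - u.2) - (v.2 - u.2) * (p.1 - u.1)) ∨
    (∀ p ∈ S \ {u, v},
      (v.1 - u.1) * (p.2 - u.2) - (v.2 - u.2) * (p.1 - u.1) < 0))

/-- A *fan* on a set `S` of at least 3 points in convex position. -/
def IsFan (S : Set Pt) (E : Set (Sym2 Pt)) : Prop :=
  InConvexPos S ∧ 3 ≤ S.ncard ∧ ∃ v₀ ∈ S,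
    E = {e | ∃ u ∈ S, ∃ v ∈ S, e = s(u, v) ∧ IsHullEdge S u v} ∪
        {e | ∃ p ∈ S, p ≠ v₀ ∧ e = s(v₀, p)}

/-- A *wheel*: one point in the interior of the convex hull, joined to all other points,
which are in convex position and joined along the hull. -/
def IsWheel (S : Set Pt) (E : Set (Sym2 Pt)) : Prop :=
  ∃ c ∈ S, c ∈ interior (convexHull ℝ S) ∧
    (∀ p ∈ S, p ∈ interior (convexHull ℝ S) → p = c) ∧
    InConvexPos (S \ {c}) ∧
    E = {e | ∃ u ∈ S, ∃ v ∈ S, e = s(u, v) ∧ IsHullEdge S u v} ∪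
        {e | ∃ p ∈ S, p ≠ c ∧ e = s(c, p)}

/-- `{u,v,w}` is a *triangle* of the triangulation `(S,E)`. -/
def IsTriangleOf (S : Set Pt) (E : Set (Sym2 Pt)) (u v w : Pt) : Prop :=
  u ≠ v ∧ u ≠ w ∧ v ≠ w ∧ s(u, v) ∈ E ∧ s(v, w) ∈ E ∧ s(u, w) ∈ E ∧
  ∀ p ∈ S, p ∉ interior (convexHull ℝ ({u, v, w} : Set Pt))

/-- The edge `{u,v}` is *flippable* in the triangulation `(S,E)`. -/
def Flippable (S : Set Pt) (E : Set (Sym2 Pt)) (u v : Pt) : Prop :=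
  s(u, v) ∈ E ∧ ∃ w ∈ S, ∃ x ∈ S, IsTriangleOf S E u v w ∧ IsTriangleOf S E u v x ∧
    (openSegment ℝ u v ∩ openSegment ℝ w x).Nonempty

/-- A biplane graph is *maximal* if no proper edge-superset is biplane. -/
def IsMaximalBiplane (S : Set Pt) (E : Set (Sym2 Pt)) : Prop :=
  IsBiplaneGraph S E ∧ ∀ E'' : Set (Sym2 Pt), IsBiplaneGraph S E'' → ¬ E ⊂ E''


-- ## Auxiliary development

/-- 2×2 determinant of two vectors. -/
def detv (u v : Pt) : ℝ := u.1 * v.2 - u.2 * v.1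

/-- Orientation determinant of an ordered triple of points. -/
def det3 (a b c : Pt) : ℝ := detv (b - a) (c - a)

lemma det3_eq (a b c : Pt) :
    det3 a b c = (b.1 - a.1) * (c.2 - a.2) - (b.2 - a.2) * (c.1 - a.1) := by
  simp [det3, detv]

lemma detv_antisymm (u v : Pt) : detv u v = - detv v u := by simp [detv]; ring
lemma detv_self (u : Pt) : detv u u = 0 := by simp [detv]; ring
lemma det3_swap12 (a b c : Pt) : det3 a b c = - det3 b a c := by simp [det3_eq]; ring
lemma det3_swap23 (a b c : Pt) : det3 a b c = - det3 a c b := by simp [det3_eq]; ring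
lemma det3_cycle (a b c : Pt) : det3 a b c = det3 b c a := by simp [det3_eq]; ring
lemma det3_decomp (a b c x : Pt) :
    det3 x b c + det3 a x c + det3 a b x = det3 a b c := by simp [det3_eq]; ring
lemma cramer3 (a b c x : Pt) :
    (det3 x b c) • a + (det3 a x c) • b + (det3 a b x) • c = (det3 a b c) • x := by
  apply Prod.ext <;> simp [det3_eq, Prod.smul_def] <;> ring

/-- the upper half plane cone used to sort around the lowest point -/
def Hv (u : Pt) : Prop := 0 < u.2 ∨ (u.2 = 0 ∧ 0 < u.1)

lemma hv_comb {u v : Pt} {α β : ℝ} (hu : Hv u) (hv : Hv v) (hα : 0 < α) (hβ : 0 < β) :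
    Hv (α • u + β • v) := by
  have h2 : (α • u + β • v).2 = α * u.2 + β * v.2 := by simp [Prod.smul_def]
  have h1 : (α • u + β • v).1 = α * u.1 + β * v.1 := by simp [Prod.smul_def]
  rcases hu with hu | ⟨hu2, hu1⟩ <;> rcases hv with hv | ⟨hv2, hv1⟩
  · exact Or.inl (by rw [h2]; positivity)
  · exact Or.inl (by rw [h2, hv2]; nlinarith)
  · exact Or.inl (by rw [h2, hu2]; nlinarith)
  · exact Or.inr ⟨by rw [h2, hu2, hv2]; ring, by rw [h1]; positivity⟩

lemma hv_ne_zero {u : Pt} (hu : Hv u) : u ≠ 0 := by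
  rintro rfl
  rcases hu with h | ⟨h, h'⟩ <;> simp_all

lemma cramer2 (u v w : Pt) : detv u v • w + detv v w • u = detv u w • v := by
  apply Prod.ext <;> simp [detv, Prod.smul_def] <;> ring

lemma detv_trans {u v w : Pt} (hu : Hv u) (hv : Hv v) (hw : Hv w)
    (h1 : 0 < detv u v) (h2 : 0 < detv v w) : 0 < detv u w := by
  by_contra h
  push_neg at h
  have hc := cramer2 u v w
  have hmem : Hv (detv u v • w + detv v w • u) := hv_comb hw hu h1 h2
  rcases eq_or_lt_of_le h with heq | hlt
  · rw [hc, heq] at hmem; simp at hmem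
    exact hv_ne_zero hmem rfl
  · rw [hc] at hmem
    have h2' : (detv u w • v).2 = detv u w * v.2 := by simp [Prod.smul_def]
    have h1' : (detv u w • v).1 = detv u w * v.1 := by simp [Prod.smul_def]
    rcases hv with hv | ⟨hv2, hv1⟩
    · rcases hmem with hm | ⟨hm, _⟩
      · rw [h2'] at hm; nlinarith
      · rw [h2'] at hm; nlinarith
    · rcases hmem with hm | ⟨hm, hm1⟩
      · rw [h2', hv2] at hm; nlinarith
      · rw [h1'] at hm1; nlinarith

/-- parallel: zero det with nonzero first vector gives scalar multiple -/
lemma detv_eq_zero_imp {u v : Pt} (h : detv u v = 0) (hu : u ≠ 0) : ∃ t : ℝ, v = t • u := by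
  by_cases h1 : u.1 ≠ 0
  · refine ⟨v.1 / u.1, ?_⟩
    apply Prod.ext
    · simp [Prod.smul_def]; field_simp
    · simp [Prod.smul_def]; field_simp
      simp [detv] at h; nlinarith [h]
  · push_neg at h1
    have h2 : u.2 ≠ 0 := by
      intro h2; exact hu (Prod.ext h1 h2)
    refine ⟨v.2 / u.2, ?_⟩
    apply Prod.ext
    · simp [detv, h1] at h
      rcases h with h | h
      · exact absurd h h2
      · simp [Prod.smul_def, h, h1]
    · simp [Prod.smul_def]; field_simp

lemma mem_diff_singleton {x y : Pt} {S : Set Pt} (hx : x ∈ S) (hxy : x ≠ y) :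
    x ∈ S \ {y} := ⟨hx, by simp [hxy]⟩

lemma convexPos_det_ne {S : Set Pt} (hconv : InConvexPos S) {a b c : Pt}
    (ha : a ∈ S) (hb : b ∈ S) (hc : c ∈ S) (hab : a ≠ b) (hac : a ≠ c) (hbc : b ≠ c) :
    det3 a b c ≠ 0 := by
  intro h
  obtain ⟨t, ht⟩ := detv_eq_zero_imp h (sub_ne_zero.mpr (Ne.symm hab))
  have hc' : c = (1 - t) • a + t • b := by
    have h2 : c = a + t • (b - a) := by rw [← ht]; abel
    rw [h2]; module
  have ht0 : t ≠ 0 := by rintro rfl; simp at hc'; exact hac hc'.symm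
  have ht1 : t ≠ 1 := by rintro rfl; simp at hc'; exact hbc hc'.symm
  rcases lt_trichotomy t 0 with h0 | h0 | h0
  · -- a ∈ segment b c
    apply hconv a ha
    apply segment_subset_convexHull (mem_diff_singleton hb (Ne.symm hab))
      (mem_diff_singleton hc (Ne.symm hac))
    have h1t : (0:ℝ) < 1 - t := by linarith
    refine ⟨-t / (1 - t), 1 / (1 - t), le_of_lt (div_pos (by linarith) h1t),
      le_of_lt (div_pos one_pos h1t), by field_simp; ring, ?_⟩
    rw [hc']; match_scalars <;> field_simp <;> ring
  · exact ht0 h0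
  rcases lt_trichotomy t 1 with h1 | h1 | h1
  · -- c ∈ segment a b
    apply hconv c hc
    apply segment_subset_convexHull (mem_diff_singleton ha hac)
      (mem_diff_singleton hb hbc)
    exact ⟨1 - t, t, by linarith, le_of_lt h0, by ring, hc'.symm⟩
  · exact absurd h1 ht1
  · -- b ∈ segment a c
    apply hconv b hb
    apply segment_subset_convexHull (mem_diff_singleton ha hab)
      (mem_diff_singleton hc (Ne.symm hbc))
    refine ⟨(t - 1) / t, 1 / t, le_of_lt (div_pos (by linarith) (by linarith)),
      le_of_lt (div_pos one_pos (by linarith)), by field_simp; ring, ?_⟩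
    rw [hc']; match_scalars <;> field_simp <;> ring

/-- combination of three points with positive weights summing to 1 lies in the hull -/
lemma mem_hull3 {a b d x : Pt} {α β γ : ℝ} (hα : 0 < α) (hβ : 0 < β) (hγ : 0 < γ)
    (hsum : α + β + γ = 1) (hx : x = α • a + β • b + γ • d) :
    x ∈ convexHull ℝ ({a, b, d} : Set Pt) := by
  have hβγ : 0 < β + γ := by linarith
  set q : Pt := (β / (β + γ)) • b + (γ / (β + γ)) • d with hq
  have hqmem : q ∈ convexHull ℝ ({a, b, d} : Set Pt) := by
    apply segment_subset_convexHull (x := b) (y := d) (by simp) (by simp)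
    exact ⟨β / (β + γ), γ / (β + γ), le_of_lt (div_pos hβ hβγ),
      le_of_lt (div_pos hγ hβγ), by field_simp, rfl⟩
  have hamem : a ∈ convexHull ℝ ({a, b, d} : Set Pt) := subset_convexHull ℝ _ (by simp)
  have hseg : x ∈ segment ℝ a q := by
    refine ⟨α, β + γ, le_of_lt hα, le_of_lt hβγ, hsum.symm ▸ by ring, ?_⟩
    rw [hx, hq, smul_add, smul_smul, smul_smul]
    rw [show (β + γ) * (β / (β + γ)) = β by field_simp]
    rw [show (β + γ) * (γ / (β + γ)) = γ by field_simp]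
    abel
  exact (convex_convexHull ℝ _).segment_subset hamem hqmem hseg

lemma exists_ccw {S : Set Pt} (hfin : S.Finite) (hconv : InConvexPos S) {n : ℕ}
    (hn : S.ncard = n) (h3 : 3 ≤ n) :
    ∃ P : ℕ → Pt, (∀ i, i < n → P i ∈ S) ∧ (∀ x ∈ S, ∃ i, i < n ∧ P i = x) ∧
      (∀ i j, i < j → j < n → P i ≠ P j) ∧
      (∀ i j k, i < j → j < k → k < n → 0 < det3 (P i) (P j) (P k)) := by
  classical
  set F : Finset Pt := hfin.toFinset with hF
  have hFS : ∀ {x : Pt}, x ∈ F ↔ x ∈ S := fun {x} => hfin.mem_toFinset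
  have hFcard : F.card = n := by rw [← hn, Set.ncard_eq_toFinset_card S hfin]
  have hFne : F.Nonempty := by rw [← Finset.card_pos, hFcard]; omega
  -- lexicographic minimum
  have hYne : (F.image Prod.snd).Nonempty := hFne.image _
  set y0 : ℝ := (F.image Prod.snd).min' hYne with hy0
  set T : Finset Pt := F.filter (fun p => p.2 = y0) with hT
  have hTne : T.Nonempty := by
    obtain ⟨p, hp, hpy⟩ := Finset.mem_image.mp ((F.image Prod.snd).min'_mem hYne)
    exact ⟨p, Finset.mem_filter.mpr ⟨hp, hpy⟩⟩
  have hXne : (T.image Prod.fst).Nonempty := hTne.image _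
  set x0 : ℝ := (T.image Prod.fst).min' hXne with hx0
  set a : Pt := (x0, y0) with ha_def
  have haF : a ∈ F := by
    obtain ⟨p, hp, hpx⟩ := Finset.mem_image.mp ((T.image Prod.fst).min'_mem hXne)
    have hp' := Finset.mem_filter.mp hp
    have hpa : p = a := Prod.ext hpx hp'.2
    exact hpa ▸ hp'.1
  have haS : a ∈ S := hFS.mp haF
  -- all other points lie in the upper cone
  have hHv : ∀ p ∈ F, p ≠ a → Hv (p - a) := by
    intro p hp hpa
    have hy : y0 ≤ p.2 := Finset.min'_le _ _ (Finset.mem_image_of_mem _ hp)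
    rcases lt_or_eq_of_le hy with h | h
    · left; simpa using h
    · have hpT : p ∈ T := Finset.mem_filter.mpr ⟨hp, h.symm⟩
      have hx : x0 ≤ p.1 := Finset.min'_le _ _ (Finset.mem_image_of_mem _ hpT)
      rcases lt_or_eq_of_le hx with h' | h'
      · right
        constructor
        · show p.2 - a.2 = 0; simp [ha_def, ← h]
        · show 0 < p.1 - a.1; simp [ha_def]; linarith
      · exact absurd (Prod.ext h'.symm h.symm) hpa
  -- the strict total order on the rest
  set F' : Finset Pt := F.erase a with hF'
  have hF'card : F'.card = n - 1 := by rw [hF', Finset.card_erase_of_mem haF, hFcard]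
  let σ := {x : Pt // x ∈ F'}
  let r : σ → σ → Prop := fun u v => 0 < detv (u.1 - a) (v.1 - a)
  have hmem' : ∀ u : σ, u.1 ∈ S ∧ u.1 ≠ a := fun u =>
    ⟨hFS.mp (Finset.mem_of_mem_erase u.2), Finset.ne_of_mem_erase u.2⟩
  have hdet_ne : ∀ u v : σ, u ≠ v → detv (u.1 - a) (v.1 - a) ≠ 0 := by
    intro u v huv h0
    have huv' : u.1 ≠ v.1 := fun h => huv (Subtype.ext h)
    exact convexPos_det_ne hconv haS (hmem' u).1 (hmem' v).1
      (Ne.symm (hmem' u).2) (Ne.symm (hmem' v).2) huv' h0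
  haveI : IsTrichotomous σ r := by
    constructor
    intro u v
    rcases eq_or_ne u v with h | h
    · exact fun _ _ => h
    · rcases lt_trichotomy (detv (u.1 - a) (v.1 - a)) 0 with hd | hd | hd
      · intro _ hvu; exfalso; apply hvu
        show 0 < detv (v.1 - a) (u.1 - a)
        rw [detv_antisymm] at hd; linarith
      · exact absurd hd (hdet_ne u v h)
      · exact fun huv _ => absurd hd huv
  haveI : IsIrrefl σ r := by
    constructor; intro u
    show ¬ 0 < detv (u.1 - a) (u.1 - a)
    rw [detv_self]; simp
  haveI : IsTrans σ r := by
    constructor; intro u v w h1 h2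
    exact detv_trans (hHv _ (Finset.mem_of_mem_erase u.2) (hmem' u).2)
      (hHv _ (Finset.mem_of_mem_erase v.2) (hmem' v).2)
      (hHv _ (Finset.mem_of_mem_erase w.2) (hmem' w).2) h1 h2
  let rle : σ → σ → Prop := fun u v => u = v ∨ r u v
  haveI : DecidableRel rle := Classical.decRel rle
  haveI hrleTr : IsTrans σ rle := by
    constructor; rintro u v w (rfl | h1) (rfl | h2)
    · exact Or.inl rfl
    · exact Or.inr h2
    · exact Or.inr h1
    · exact Or.inr (Trans.trans h1 h2)
  haveI hrleAs : IsAntisymm σ rle := by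
    constructor; rintro u v (rfl | h1) (h | h2)
    · rfl
    · rfl
    · exact h.symm
    · exfalso
      have : detv (↑u - a) (↑v - a) = - detv (↑v - a) (↑u - a) := detv_antisymm _ _
      have h1' : (0:ℝ) < detv (↑u - a) (↑v - a) := h1
      have h2' : (0:ℝ) < detv (↑v - a) (↑u - a) := h2
      rw [this] at h1'; linarith
  haveI hrleTot : IsTotal σ rle := by
    constructor; intro u v
    rcases trichotomous_of r u v with h | h | h
    · exact Or.inl (Or.inr h)
    · exact Or.inl (Or.inl h)
    · exact Or.inr (Or.inr h)
  set L : List σ := (Finset.univ : Finset σ).sort rle with hL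
  have hLlen : L.length = n - 1 := by
    rw [hL, Finset.length_sort, Finset.card_univ, Fintype.card_coe, hF'card]
  have hLnodup : L.Nodup := Finset.sort_nodup _ _
  have hLsorted : L.Pairwise rle := Finset.pairwise_sort _ _
  have hLmem : ∀ u : σ, u ∈ L := fun u => (Finset.mem_sort rle).mpr (Finset.mem_univ u)
  have he_r : ∀ (u v : Fin L.length), (u:ℕ) < (v:ℕ) → r (L.get u) (L.get v) := by
    intro u v huv
    have h1 := List.Pairwise.rel_get_of_lt hLsorted (by exact huv)
    rcases h1 with h | h
    · exfalso
      have := (List.Nodup.get_inj_iff hLnodup).mp h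
      omega
    · exact h
  -- the enumeration
  set P : ℕ → Pt := fun i =>
    if i = 0 then a else if h2 : i - 1 < L.length then (L.get ⟨i - 1, h2⟩ : σ).1 else a with hP
  have hP0 : P 0 = a := by simp [hP]
  have hPpos : ∀ i, 0 < i → i < n → ∃ h2 : i - 1 < L.length, P i = (L.get ⟨i - 1, h2⟩ : σ).1 := by
    intro i h0 hin
    have h0' : i ≠ 0 := by omega
    have h2 : i - 1 < L.length := by rw [hLlen]; omega
    exact ⟨h2, by simp [hP, h0', h2]⟩
  have hPmem : ∀ i, i < n → P i ∈ S := by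
    intro i hin
    rcases Nat.eq_zero_or_pos i with h | h
    · rw [h, hP0]; exact haS
    · obtain ⟨h2, hPi⟩ := hPpos i h hin
      rw [hPi]; exact (hmem' _).1
  have hPinj : ∀ i j, i < j → j < n → P i ≠ P j := by
    intro i j hij hjn
    obtain ⟨h2, hPj⟩ := hPpos j (by omega) hjn
    rcases Nat.eq_zero_or_pos i with h | h
    · rw [h, hP0, hPj]; exact Ne.symm (hmem' _).2
    · obtain ⟨h1, hPi⟩ := hPpos i h (by omega)
      rw [hPi, hPj]
      intro hval
      have hgg : L.get ⟨i - 1, h1⟩ = L.get ⟨j - 1, h2⟩ := Subtype.ext hval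
      have := (List.Nodup.get_inj_iff hLnodup).mp hgg
      have : i - 1 = j - 1 := by simpa [Fin.ext_iff] using this
      omega
  -- base order property from the sorting
  have hM1 : ∀ j k, 0 < j → j < k → k < n → 0 < det3 a (P j) (P k) := by
    intro j k hj hjk hkn
    obtain ⟨h2, hPj⟩ := hPpos j hj (by omega)
    obtain ⟨h3', hPk⟩ := hPpos k (by omega) hkn
    rw [hPj, hPk]
    exact he_r ⟨j-1, h2⟩ ⟨k-1, h3'⟩ (by simp; omega)
  refine ⟨P, hPmem, ?_, hPinj, ?_⟩
  · -- surjectivity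
    intro x hx
    rcases eq_or_ne x a with h | h
    · exact ⟨0, by omega, by rw [hP0, h]⟩
    · have hxF' : x ∈ F' := Finset.mem_erase.mpr ⟨h, hFS.mpr hx⟩
      set u : σ := ⟨x, hxF'⟩ with hu
      obtain ⟨idx, hidx⟩ := List.mem_iff_get.mp (hLmem u)
      refine ⟨(idx:ℕ) + 1, by have h1 := idx.2; have h2 := hLlen; omega, ?_⟩
      obtain ⟨h2, hPi⟩ := hPpos ((idx:ℕ) + 1) (by omega)
        (by have h1 := idx.2; have h2 := hLlen; omega)
      rw [hPi]
      have hfi : (⟨(idx:ℕ) + 1 - 1, h2⟩ : Fin L.length) = idx := by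
        apply Fin.ext; simp
      rw [hfi, hidx]
  · -- the ccw property
    intro i j k hij hjk hkn
    rcases Nat.eq_zero_or_pos i with h | h
    · rw [h, hP0]
      exact hM1 j k (by omega) hjk hkn
    · -- general position upgrade using convexity
      set B := P i with hB
      set C := P j with hC
      set D := P k with hD
      have h1 : 0 < det3 a B C := hM1 i j h hij (by omega)
      have h2 : 0 < det3 a B D := hM1 i k h (by omega) hkn
      have h3' : 0 < det3 a C D := hM1 j k (by omega) hjk hkn
      by_contra hneg
      push_neg at hneg
      have hBS : B ∈ S := hPmem i (by omega)
      have hCS : C ∈ S := hPmem j (by omega)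
      have hDS : D ∈ S := hPmem k hkn
      have hBC : B ≠ C := hPinj i j hij (by omega)
      have hBD : B ≠ D := hPinj i k (by omega) hkn
      have hCD : C ≠ D := hPinj j k hjk hkn
      have hne : det3 B C D ≠ 0 := convexPos_det_ne hconv hBS hCS hDS hBC hBD hCD
      have hlt : det3 B C D < 0 := lt_of_le_of_ne hneg hne
      -- distinctness from a
      have haB : a ≠ B := by rw [hB, ← hP0]; exact hPinj 0 i h (by omega)
      have haC : a ≠ C := by rw [hC, ← hP0]; exact hPinj 0 j (by omega) (by omega)
      have haD : a ≠ D := by rw [hD, ← hP0]; exact hPinj 0 k (by omega) hkn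
      -- barycentric: C in hull of {a, B, D}
      set D0 := det3 a B D with hD0
      have hα : 0 < det3 C B D := by rw [det3_swap12]; linarith
      have hβ : 0 < det3 a C D := h3'
      have hγ : 0 < det3 a B C := h1
      have hsum : det3 C B D + det3 a C D + det3 a B C = D0 := det3_decomp a B D C
      have hcr := cramer3 a B D C
      have hD0pos : 0 < D0 := h2
      have hCmem : C ∈ convexHull ℝ ({a, B, D} : Set Pt) := by
        apply mem_hull3 (α := det3 C B D / D0) (β := det3 a C D / D0) (γ := det3 a B C / D0)
          (div_pos hα hD0pos) (div_pos hβ hD0pos) (div_pos hγ hD0pos)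
        · field_simp
          linarith [hsum]
        · have hgoal : D0 • C = D0 • ((det3 C B D / D0) • a + (det3 a C D / D0) • B +
              (det3 a B C / D0) • D) := by
            rw [← hcr]
            match_scalars <;> field_simp <;> ring
          exact smul_right_injective Pt (ne_of_gt hD0pos) hgoal
      apply hconv C hCS
      apply convexHull_mono (show ({a, B, D} : Set Pt) ⊆ S \ {C} by
        intro x hx
        rcases hx with rfl | rfl | rfl
        · exact mem_diff_singleton haS haC
        · exact mem_diff_singleton hBS hBC
        · exact mem_diff_singleton hDS (Ne.symm hCD))
      exact hCmem

lemma openSeg_mk (u v : Pt) : openSeg s(u, v) = openSegment ℝ u v := rfl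

lemma det3_affine {α β : ℝ} (a b u v : Pt) (hs : α + β = 1) :
    det3 a b (α • u + β • v) = α * det3 a b u + β * det3 a b v := by
  have hβ : β = 1 - α := by linarith
  subst hβ
  simp [det3_eq, Prod.smul_def]
  ring

lemma det3_self2 (a b : Pt) : det3 a b a = 0 := by simp [det3_eq]
lemma det3_self3 (a b : Pt) : det3 a b b = 0 := by simp [det3_eq]; ring_nf

lemma det3_of_mem_openSegment {a b u v x : Pt} (hx : x ∈ openSegment ℝ u v) :
    ∃ α β : ℝ, 0 < α ∧ 0 < β ∧ α + β = 1 ∧ det3 a b x = α * det3 a b u + β * det3 a b v := by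
  obtain ⟨α, β, hα, hβ, hs, hx⟩ := hx
  exact ⟨α, β, hα, hβ, hs, by rw [← hx, det3_affine _ _ _ _ hs]⟩

lemma det3_zero_of_mem_openSegment {u v x : Pt} (hx : x ∈ openSegment ℝ u v) :
    det3 u v x = 0 := by
  obtain ⟨α, β, _, _, hs, hval⟩ := det3_of_mem_openSegment (a := u) (b := v) hx
  rw [hval, det3_self2, det3_self3]; ring

lemma noncross_of_sameside {a b u v : Pt} (h : 0 < det3 a b u * det3 a b v) :
    ¬ Cross s(a, b) s(u, v) := by
  rintro ⟨x, hx1, hx2⟩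
  rw [openSeg_mk] at hx1 hx2
  have h0 : det3 a b x = 0 := det3_zero_of_mem_openSegment hx1
  obtain ⟨α, β, hα, hβ, hs, hval⟩ := det3_of_mem_openSegment (a := a) (b := b) hx2
  rw [h0] at hval
  rcases mul_pos_iff.mp h with ⟨hu, hv⟩ | ⟨hu, hv⟩
  · nlinarith [mul_pos hα hu, mul_pos hβ hv]
  · nlinarith [mul_neg_of_pos_of_neg hα hu, mul_neg_of_pos_of_neg hβ hv]

lemma noncross_of_shared {c q r : Pt} (h : det3 c q r ≠ 0) :
    ¬ Cross s(c, q) s(c, r) := by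
  rintro ⟨x, hx1, hx2⟩
  rw [openSeg_mk] at hx1 hx2
  apply h
  obtain ⟨α, β, hα, hβ, hs, hxe⟩ := hx1
  obtain ⟨γ, δ, hγ, hδ, hs2, hxe2⟩ := hx2
  have e1 : x - c = β • (q - c) := by
    rw [← hxe]; have : α = 1 - β := by linarith
    subst this; module
  have e2 : x - c = δ • (r - c) := by
    rw [← hxe2]; have : γ = 1 - δ := by linarith
    subst this; module
  have heq : β • (q - c) = δ • (r - c) := by rw [← e1, ← e2]
  have hcomp1 : β * (q.1 - c.1) = δ * (r.1 - c.1) := by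
    have := congrArg Prod.fst heq; simpa [Prod.smul_def] using this
  have hcomp2 : β * (q.2 - c.2) = δ * (r.2 - c.2) := by
    have := congrArg Prod.snd heq; simpa [Prod.smul_def] using this
  have hkey : β * ((q.1 - c.1) * (r.2 - c.2) - (q.2 - c.2) * (r.1 - c.1)) = 0 := by
    linear_combination (r.2 - c.2) * hcomp1 - (r.1 - c.1) * hcomp2
  rw [det3_eq]
  exact (mul_eq_zero.mp hkey).resolve_left (ne_of_gt hβ)

/-- interleaved chords cross -/
lemma cross_of_interleave {A B C D : Pt}
    (h1 : det3 A C B < 0) (h2 : 0 < det3 A C D)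
    (h3 : 0 < det3 B D A) (h4 : det3 B D C < 0) :
    Cross s(A, C) s(B, D) := by
  set t : ℝ := det3 A C B / (det3 A C B - det3 A C D) with ht
  have hden : det3 A C B - det3 A C D < 0 := by linarith
  have ht0 : 0 < t := div_pos_of_neg_of_neg h1 hden
  have ht1 : t < 1 := by
    rw [ht, div_lt_one_of_neg hden]
    linarith
  set X : Pt := (1 - t) • B + t • D with hX
  have hXBD : X ∈ openSegment ℝ B D := ⟨1 - t, t, by linarith, ht0, by ring, rfl⟩
  have hXAC : det3 A C X = 0 := by
    rw [hX, det3_affine _ _ _ _ (by ring : (1 - t) + t = 1)]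
    have hdne : det3 A C B - det3 A C D ≠ 0 := ne_of_lt hden
    rw [ht]; field_simp
    ring
  have hAC : C - A ≠ 0 := by
    intro hc
    have hCA : C = A := sub_eq_zero.mp hc
    rw [hCA] at h1
    have : det3 A A B = 0 := by simp [det3_eq]
    linarith
  -- X = (1-τ) A + τ C for some τ
  obtain ⟨τ, hτ⟩ := detv_eq_zero_imp (show detv (C - A) (X - A) = 0 from hXAC) hAC
  have hXrep : X = (1 - τ) • A + τ • C := by
    have : X = A + τ • (C - A) := by rw [← hτ]; abel
    rw [this]; module
  have hXBD0 : det3 B D X = 0 := det3_zero_of_mem_openSegment hXBD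
  rw [hXrep, det3_affine _ _ _ _ (by ring : (1 - τ) + τ = 1)] at hXBD0
  have hτ0 : 0 < τ := by nlinarith
  have hτ1 : τ < 1 := by nlinarith
  refine ⟨X, ?_, ?_⟩
  · rw [openSeg_mk]
    exact ⟨1 - τ, τ, by linarith, hτ0, by ring, hXrep.symm⟩
  · rw [openSeg_mk]; exact hXBD

lemma conn_core (n : ℕ) (hn : 6 ≤ n) (R : ℕ → Prop) (reach : ℕ → ℕ → Prop)
    (m1 m2 m3 : ℕ)
    (hcover : ∀ i, i < n → ¬ R i → i = m1 ∨ i = m2 ∨ i = m3)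
    (hrefl : ∀ i, i < n → R i → reach i i)
    (hsymm : ∀ i j, reach i j → reach j i)
    (htrans : ∀ i j k, reach i j → reach j k → reach i k)
    (e1 : ∀ i, i + 1 < n → R i → R (i+1) → reach i (i+1))
    (e2 : ∀ i, i + 2 < n → R i → R (i+2) → reach i (i+2))
    (e3 : R 0 → R (n-1) → reach 0 (n-1))
    (e4 : R 0 → R (n-2) → reach 0 (n-2))
    (e5 : (R 1 → R (n-1) → reach 1 (n-1)) ∨
      ((R 1 → R (n-2) → reach 1 (n-2)) ∧ (R 2 → R (n-1) → reach 2 (n-1)))) :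
    ∀ i j, i < n → j < n → R i → R j → reach i j := by
  -- rightward chain walk
  have chainR : ∀ j, j < n → R j → ∀ i, i ≤ j → R i →
      (∀ k, i ≤ k → k + 1 < j → ¬ R k → ¬ R (k+1) → False) → reach i j := by
    intro j
    induction j using Nat.strong_induction_on with
    | _ j IH =>
      intro hjn hRj i hij hRi hnb
      rcases Nat.lt_or_ge i j with hlt | hge
      · -- i < j
        by_cases hRj1 : R (j - 1)
        · have hr1 : reach i (j-1) := by
            apply IH (j-1) (by omega) (by omega) hRj1 i (by omega) hRi
            intro k hk1 hk2 hk3 hk4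
            exact hnb k hk1 (by omega) hk3 hk4
          have : reach (j-1) j := by
            have := e1 (j-1) (by omega) hRj1 (by rwa [show j - 1 + 1 = j by omega])
            rwa [show j - 1 + 1 = j by omega] at this
          exact htrans _ _ _ hr1 this
        · -- j - 1 not in R, so j ≥ i + 2 and j - 2 ∈ R
          have hij2 : i + 2 ≤ j := by
            rcases Nat.lt_or_ge (i+1) j with h | h
            · omega
            · exfalso; have : j - 1 = i := by omega
              rw [this] at hRj1; exact hRj1 hRi
          have hRj2 : R (j - 2) := by
            by_contra hR2
            exact hnb (j-2) (by omega) (by omega) hR2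
              (by rwa [show j - 2 + 1 = j - 1 by omega])
          have hr1 : reach i (j-2) := by
            apply IH (j-2) (by omega) (by omega) hRj2 i (by omega) hRi
            intro k hk1 hk2 hk3 hk4
            exact hnb k hk1 (by omega) hk3 hk4
          have : reach (j-2) j := by
            have := e2 (j-2) (by omega) hRj2 (by rwa [show j - 2 + 2 = j by omega])
            rwa [show j - 2 + 2 = j by omega] at this
          exact htrans _ _ _ hr1 this
      · have : i = j := by omega
        subst this; exact hrefl i hjn hRi
  -- main, for i ≤ j
  have key : ∀ i j, i < n → j < n → R i → R j → i ≤ j → reach i j := by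
    intro i j hin hjn hRi hRj hij
    by_cases hblock : ∃ k, i ≤ k ∧ k + 1 < j ∧ ¬ R k ∧ ¬ R (k+1)
    · obtain ⟨k, hik, hkj, hRk, hRk1⟩ := hblock
      have hikx : i < k := by
        rcases Nat.lt_or_ge i k with h | h
        · exact h
        · exfalso; have : i = k := by omega
          subst this; exact hRk hRi
      have hck := hcover k (by omega) hRk
      have hck1 := hcover (k+1) (by omega) hRk1
      -- any other missing vertex is unique
      have huniq : ∀ x y, x < n → y < n → ¬ R x → ¬ R y →
          x ≠ k → x ≠ k + 1 → y ≠ k → y ≠ k + 1 → x = y := by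
        intro x y hxn hyn hRx hRy hx1 hx2 hy1 hy2
        have hcx := hcover x hxn hRx
        have hcy := hcover y hyn hRy
        omega
      -- no blocks away from k
      have hnoblock : ∀ k', k' + 1 < n → ¬ R k' → ¬ R (k'+1) →
          k' + 1 = k ∨ k' = k ∨ k' = k + 1 := by
        intro k' h1' h2' h3'
        by_contra hcon
        push_neg at hcon
        have e1' : k' = k + 1 + 1 → False := by
          intro he
          have := huniq (k'+1) k' (by omega) (by omega) h3' h2' (by omega) (by omega)
            (by omega) (by omega)
          omega
        have hcx := hcover k' (by omega) h2'
        have hcy := hcover (k'+1) (by omega) h3'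
        omega
      by_cases hR0 : R 0
      · -- connect i to 0
        have hri : reach 0 i := by
          apply chainR i hin hRi 0 (by omega) hR0
          intro k' h1' h2' h3' h4'
          have := hnoblock k' (by omega) h3' h4'
          omega
        by_cases hRn1 : R (n-1)
        · have hrj : reach j (n-1) := by
            apply chainR (n-1) (by omega) hRn1 j (by omega) hRj
            intro k' h1' h2' h3' h4'
            have := hnoblock k' (by omega) h3' h4'
            omega
          exact htrans _ _ _ (hsymm _ _ hri) (htrans _ _ _ (e3 hR0 hRn1) (hsymm _ _ hrj))
        · -- n-1 is the stray missing vertex; n-2 must be in R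
          have hjn2 : j ≤ n - 2 := by
            have : j ≠ n - 1 := fun h => hRn1 (h ▸ hRj)
            omega
          have hne : n - 1 ≠ k ∧ n - 1 ≠ k + 1 := by omega
          have hRn2 : R (n-2) := by
            by_contra hR2
            have h1' : n - 2 ≠ k := by omega
            have h2' : n - 2 ≠ k + 1 := by omega
            have := huniq (n-2) (n-1) (by omega) (by omega) hR2 hRn1 h1' h2' hne.1 hne.2
            omega
          have hrj : reach j (n-2) := by
            apply chainR (n-2) (by omega) hRn2 j (by omega) hRj
            intro k' h1' h2' h3' h4'
            have := hnoblock k' (by omega) h3' h4'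
            omega
          exact htrans _ _ _ (hsymm _ _ hri) (htrans _ _ _ (e4 hR0 hRn2) (hsymm _ _ hrj))
      · -- 0 is the stray missing vertex
        have h0k : (0:ℕ) ≠ k ∧ (0:ℕ) ≠ k + 1 := by
          constructor <;> omega
        have hstray : ∀ x, x < n → ¬ R x → x = 0 ∨ x = k ∨ x = k + 1 := by
          intro x hxn hRx
          by_contra hcon
          push_neg at hcon
          have := huniq x 0 hxn (by omega) hRx hR0 (by tauto) (by tauto) h0k.1 h0k.2
          omega
        have hik1 : 1 ≤ i := by
          rcases Nat.eq_zero_or_pos i with h | h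
          · exfalso; rw [h] at hRi; exact hR0 hRi
          · omega
        have hR1 : R 1 := by
          by_contra hc
          have := hstray 1 (by omega) hc
          omega
        have hRn1 : R (n-1) := by
          by_contra hc
          have := hstray (n-1) (by omega) hc
          omega
        have hri : reach 1 i := by
          apply chainR i hin hRi 1 (by omega) hR1
          intro k' h1' h2' h3' h4'
          have := hnoblock k' (by omega) h3' h4'
          omega
        have hrj : reach j (n-1) := by
          apply chainR (n-1) (by omega) hRn1 j (by omega) hRj
          intro k' h1' h2' h3' h4'
          have := hnoblock k' (by omega) h3' h4'
          omega
        have h1n1 : reach 1 (n-1) := by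
          rcases e5 with h5 | ⟨h5a, h5b⟩
          · exact h5 hR1 hRn1
          · by_cases hRn2 : R (n-2)
            · have ha : reach 1 (n-2) := h5a hR1 hRn2
              have hb : reach (n-2) (n-1) := by
                have := e1 (n-2) (by omega) hRn2 (by rwa [show n-2+1 = n-1 by omega])
                rwa [show n-2+1 = n-1 by omega] at this
              exact htrans _ _ _ ha hb
            · -- n-2 missing: n-2 = k+1, hence k ≥ 3 is impossible? derive R 2
              have hn2 : n - 2 = k + 1 := by
                have := hstray (n-2) (by omega) hRn2
                omega
              have hR2 : R 2 := by
                by_contra hc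
                have := hstray 2 (by omega) hc
                omega
              have h12 : reach 1 2 := e1 1 (by omega) hR1 hR2
              exact htrans _ _ _ h12 (h5b hR2 hRn1)
        exact htrans _ _ _ (hsymm _ _ hri) (htrans _ _ _ h1n1 (hsymm _ _ hrj))
    · push_neg at hblock
      apply chainR j hjn hRj i hij hRi
      intro k hk1 hk2 hk3 hk4
      exact hk4 (hblock k hk1 hk2 hk3)
  intro i j hin hjn hRi hRj
  rcases Nat.le_total i j with h | h
  · exact key i j hin hjn hRi hRj h
  · exact hsymm _ _ (key j i hjn hin hRj hRi h)

lemma cross_symm {e f : Sym2 Pt} (h : Cross e f) : Cross f e := by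
  obtain ⟨x, h1, h2⟩ := h; exact ⟨x, h2, h1⟩

lemma finset_card_le_three {F : Finset ℕ} (hF : F.card ≤ 3) :
    ∃ a b c, ∀ x ∈ F, x = a ∨ x = b ∨ x = c := by
  classical
  have hlen : F.toList.length ≤ 3 := by rw [Finset.length_toList]; exact hF
  have hmem : ∀ x, x ∈ F ↔ x ∈ F.toList := fun x => (Finset.mem_toList).symm
  rcases hL : F.toList with _ | ⟨a, _ | ⟨b, _ | ⟨c, _ | _⟩⟩⟩
  · exact ⟨0, 0, 0, fun x hx => by rw [hmem, hL] at hx; simp at hx⟩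
  · exact ⟨a, a, a, fun x hx => by rw [hmem, hL] at hx; simp at hx; tauto⟩
  · exact ⟨a, b, b, fun x hx => by rw [hmem, hL] at hx; simp at hx; tauto⟩
  · exact ⟨a, b, c, fun x hx => by rw [hmem, hL] at hx; simp at hx; tauto⟩
  · exfalso; rw [hL] at hlen; simp at hlen; omega

set_option maxHeartbeats 1000000 in
lemma backward (S : Set Pt) (hfin : S.Finite) (hconv : InConvexPos S) (n : ℕ)
    (hn : S.ncard = n) (h6 : 6 ≤ n) :
    ∃ E : Set (Sym2 Pt), IsBiplaneGraph S E ∧ KConnected 4 S E := by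
  classical
  obtain ⟨P, hPmem, hPsurj, hPinj, hccw⟩ := exists_ccw hfin hconv hn (by omega)
  -- side lemmas
  have hpos : ∀ i j k, i < j → j < n → k < n → (k < i ∨ j < k) →
      0 < det3 (P i) (P j) (P k) := by
    intro i j k hij hjn hkn hk
    rcases hk with hk | hk
    · rw [← det3_cycle]
      exact hccw k i j hk hij hjn
    · exact hccw i j k hij hk hkn
  have hneg : ∀ i j k, i < k → k < j → j < n → det3 (P i) (P j) (P k) < 0 := by
    intro i j k hik hkj hjn
    have := hccw i k j hik hkj hjn
    rw [det3_swap23] at this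
    linarith
  have hne0 : ∀ i j k, i < j → j < n → k < n → k ≠ i → k ≠ j →
      det3 (P i) (P j) (P k) ≠ 0 := by
    intro i j k hij hjn hkn h1 h2
    rcases Nat.lt_or_ge k j with h | h
    · rcases Nat.lt_or_ge k i with h' | h'
      · exact ne_of_gt (hpos i j k hij hjn hkn (Or.inl h'))
      · exact ne_of_lt (hneg i j k (by omega) h hjn)
    · exact ne_of_gt (hpos i j k hij hjn hkn (Or.inr (by omega)))
  -- the grand non-crossing lemma
  have hNC : ∀ i j k l, i < j → j < n → k < l → l < n → ¬ (k = i ∧ l = j) →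
      (k = i ∨ k = j ∨ l = i ∨ l = j ∨ ((i < k ∧ k < j) ↔ (i < l ∧ l < j))) →
      ¬ Cross s(P i, P j) s(P k, P l) := by
    intro i j k l hij hjn hkl hln hpair hcond
    by_cases hki : k = i
    · subst hki
      have hlj : l ≠ j := fun h => hpair ⟨rfl, h⟩
      exact noncross_of_shared (hne0 k j l hij hjn hln (by omega) hlj)
    by_cases hkj : k = j
    · subst hkj
      rw [Sym2.eq_swap (a := P i)]
      apply noncross_of_shared
      rw [det3_swap12]
      exact neg_ne_zero.mpr (hne0 i k l hij hjn hln (by omega) (by omega))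
    by_cases hli : l = i
    · subst hli
      rw [Sym2.eq_swap (a := P k)]
      exact noncross_of_shared (hne0 l j k hij hjn (by omega) (by omega) (by omega))
    by_cases hlj : l = j
    · subst hlj
      rw [Sym2.eq_swap (a := P i), Sym2.eq_swap (a := P k)]
      apply noncross_of_shared
      rw [det3_swap12]
      exact neg_ne_zero.mpr (hne0 i l k hij hjn (by omega) hki (by omega))
    -- now all four indices distinct
    have hiff : (i < k ∧ k < j) ↔ (i < l ∧ l < j) := by tauto
    by_cases hk : i < k ∧ k < j
    · have hl : i < l ∧ l < j := hiff.mp hk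
      apply noncross_of_sameside
      have h1 := hneg i j k hk.1 hk.2 hjn
      have h2 := hneg i j l hl.1 hl.2 hjn
      nlinarith
    · have hl : ¬ (i < l ∧ l < j) := fun h => hk (hiff.mpr h)
      apply noncross_of_sameside
      have h1 := hpos i j k hij hjn (by omega) (by omega)
      have h2 := hpos i j l hij hjn hln (by omega)
      nlinarith
  -- the edge sets
  set E1 : Set (Sym2 Pt) :=
    {e | ∃ i, i + 1 < n ∧ e = s(P i, P (i+1))} ∪ {s(P 0, P (n-1))}
    ∪ {e | ∃ i, i + 2 < n ∧ i % 2 = 0 ∧ e = s(P i, P (i+2))}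
    ∪ {e | (n % 2 = 0 ∧ e = s(P 0, P (n-2))) ∨ (n % 2 = 1 ∧ e = s(P 2, P (n-1)))}
    with hE1
  set E2 : Set (Sym2 Pt) :=
    {e | ∃ i, i + 2 < n ∧ i % 2 = 1 ∧ e = s(P i, P (i+2))}
    ∪ {e | (n % 2 = 0 ∧ e = s(P 1, P (n-1))) ∨
           (n % 2 = 1 ∧ (e = s(P 0, P (n-2)) ∨ e = s(P 1, P (n-2))))}
    with hE2
  -- canonical descriptions
  have hE1cases : ∀ e ∈ E1, ∃ i j, i < j ∧ j < n ∧ e = s(P i, P j) ∧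
      ((j = i+1) ∨ (i = 0 ∧ j = n-1) ∨ (j = i+2 ∧ i % 2 = 0) ∨
       (n % 2 = 0 ∧ i = 0 ∧ j = n-2) ∨ (n % 2 = 1 ∧ i = 2 ∧ j = n-1)) := by
    intro e he
    rcases he with ((⟨i, hi, rfl⟩ | he) | ⟨i, hi, hpar, rfl⟩) | (⟨hp, rfl⟩ | ⟨hp, rfl⟩)
    · exact ⟨i, i+1, by omega, by omega, rfl, by omega⟩
    · rw [Set.mem_singleton_iff] at he
      exact ⟨0, n-1, by omega, by omega, he, by omega⟩
    · exact ⟨i, i+2, by omega, by omega, rfl, by omega⟩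
    · exact ⟨0, n-2, by omega, by omega, rfl, by omega⟩
    · exact ⟨2, n-1, by omega, by omega, rfl, by omega⟩
  have hE2cases : ∀ e ∈ E2, ∃ i j, i < j ∧ j < n ∧ e = s(P i, P j) ∧
      ((j = i+2 ∧ i % 2 = 1) ∨ (n % 2 = 0 ∧ i = 1 ∧ j = n-1) ∨
       (n % 2 = 1 ∧ i = 0 ∧ j = n-2) ∨ (n % 2 = 1 ∧ i = 1 ∧ j = n-2)) := by
    intro e he
    rcases he with ⟨i, hi, hpar, rfl⟩ | (⟨hp, rfl⟩ | ⟨hp, (rfl | rfl)⟩)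
    · exact ⟨i, i+2, by omega, by omega, rfl, by omega⟩
    · exact ⟨1, n-1, by omega, by omega, rfl, by omega⟩
    · exact ⟨0, n-2, by omega, by omega, rfl, by omega⟩
    · exact ⟨1, n-2, by omega, by omega, rfl, by omega⟩
  -- edge set on S
  have hedgeon : ∀ (E' : Set (Sym2 Pt)),
      (∀ e ∈ E', ∃ i j, i < j ∧ j < n ∧ e = s(P i, P j)) → IsEdgeSetOn S E' := by
    intro E' hc e he
    obtain ⟨i, j, hij, hjn, rfl⟩ := hc e he
    constructor
    · rw [Sym2.isDiag_iff_proj_eq]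
      exact hPinj i j hij hjn
    · intro p hp
      rw [Sym2.mem_iff] at hp
      rcases hp with rfl | rfl
      · exact hPmem i (by omega)
      · exact hPmem j hjn
  have hplane1 : IsPlaneGraph S E1 := by
    constructor
    · exact hedgeon E1 (fun e he => by
        obtain ⟨i, j, h1, h2, h3, _⟩ := hE1cases e he; exact ⟨i, j, h1, h2, h3⟩)
    · intro e he f hf hef
      obtain ⟨i, j, hij, hjn, rfl, hQ⟩ := hE1cases e he
      obtain ⟨k, l, hkl, hln, rfl, hQ'⟩ := hE1cases f hf
      have hpair : ¬ (k = i ∧ l = j) := by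
        rintro ⟨rfl, rfl⟩; exact hef rfl
      exact hNC i j k l hij hjn hkl hln hpair (by omega)
  have hplane2 : IsPlaneGraph S E2 := by
    constructor
    · exact hedgeon E2 (fun e he => by
        obtain ⟨i, j, h1, h2, h3, _⟩ := hE2cases e he; exact ⟨i, j, h1, h2, h3⟩)
    · intro e he f hf hef
      obtain ⟨i, j, hij, hjn, rfl, hQ⟩ := hE2cases e he
      obtain ⟨k, l, hkl, hln, rfl, hQ'⟩ := hE2cases f hf
      have hpair : ¬ (k = i ∧ l = j) := by
        rintro ⟨rfl, rfl⟩; exact hef rfl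
      exact hNC i j k l hij hjn hkl hln hpair (by omega)
  refine ⟨E1 ∪ E2, ⟨?_, E1, E2, rfl, hplane1, hplane2⟩, ?_, ?_⟩
  · intro e he
    rcases he with he | he
    · exact hplane1.1 e he
    · exact hplane2.1 e he
  · rw [hn]; omega
  · -- connectivity
    intro C hCS hCcard
    have hCfin : C.Finite := hfin.subset hCS
    set Mf : Finset ℕ := (Finset.range n).filter (fun i => P i ∈ C) with hMf
    have hMfcard : Mf.card ≤ 3 := by
      have h1 : Mf.card ≤ hCfin.toFinset.card := by
        apply Finset.card_le_card_of_injOn P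
        · intro i hi
          rw [Finset.mem_coe, Set.Finite.mem_toFinset]
          exact (Finset.mem_filter.mp hi).2
        · intro i hi j hj hPij
          have hi' := Finset.mem_filter.mp hi
          have hj' := Finset.mem_filter.mp hj
          rcases Nat.lt_trichotomy i j with h | h | h
          · exact absurd hPij (hPinj i j h (Finset.mem_range.mp hj'.1))
          · exact h
          · exact absurd hPij.symm (hPinj j i h (Finset.mem_range.mp hi'.1))
      have h2 : hCfin.toFinset.card = C.ncard := (Set.ncard_eq_toFinset_card _ hCfin).symm
      omega
    obtain ⟨m1, m2, m3, hm⟩ := finset_card_le_three hMfcard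
    set G := (SimpleGraph.fromEdgeSet (E1 ∪ E2)).induce (S \ C) with hG
    set R : ℕ → Prop := fun i => i < n ∧ P i ∉ C with hR
    have hmemSC : ∀ i, R i → P i ∈ S \ C := fun i hi => ⟨hPmem i hi.1, hi.2⟩
    set reach : ℕ → ℕ → Prop := fun i j =>
      ∃ (hi : P i ∈ S \ C) (hj : P j ∈ S \ C), G.Reachable ⟨P i, hi⟩ ⟨P j, hj⟩ with hreach
    have hadj : ∀ i j, i < n → j < n → i ≠ j → R i → R j →
        s(P i, P j) ∈ E1 ∪ E2 → reach i j := by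
      intro i j hin hjn hij hRi hRj hmem
      refine ⟨hmemSC i hRi, hmemSC j hRj, SimpleGraph.Adj.reachable ?_⟩
      show (SimpleGraph.fromEdgeSet (E1 ∪ E2)).Adj (P i) (P j)
      rw [SimpleGraph.fromEdgeSet_adj]
      refine ⟨hmem, ?_⟩
      rcases Nat.lt_or_ge i j with h | h
      · exact hPinj i j h hjn
      · exact (hPinj j i (by omega) hin).symm
    have hcover : ∀ i, i < n → ¬ R i → i = m1 ∨ i = m2 ∨ i = m3 := by
      intro i hin hRi
      apply hm
      rw [hMf, Finset.mem_filter, Finset.mem_range]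
      refine ⟨hin, ?_⟩
      by_contra hc
      exact hRi ⟨hin, hc⟩
    have hrefl : ∀ i, i < n → R i → reach i i := fun i hin hRi =>
      ⟨hmemSC i hRi, hmemSC i hRi, SimpleGraph.Reachable.refl _⟩
    have hsymm : ∀ i j, reach i j → reach j i := by
      rintro i j ⟨hi, hj, h⟩; exact ⟨hj, hi, h.symm⟩
    have htrans : ∀ i j k, reach i j → reach j k → reach i k := by
      rintro i j k ⟨hi, hj, h⟩ ⟨hj', hk, h'⟩
      exact ⟨hi, hk, h.trans h'⟩
    have me1 : ∀ i, i + 1 < n → s(P i, P (i+1)) ∈ E1 ∪ E2 :=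
      fun i h => Or.inl (Or.inl (Or.inl (Or.inl ⟨i, h, rfl⟩)))
    have me3 : s(P 0, P (n-1)) ∈ E1 ∪ E2 := Or.inl (Or.inl (Or.inl (Or.inr rfl)))
    have me2 : ∀ i, i + 2 < n → s(P i, P (i+2)) ∈ E1 ∪ E2 := by
      intro i h
      rcases Nat.even_or_odd i with hp | hp
      · exact Or.inl (Or.inl (Or.inr ⟨i, h, Nat.even_iff.mp hp, rfl⟩))
      · exact Or.inr (Or.inl ⟨i, h, Nat.odd_iff.mp hp, rfl⟩)
    have me4 : s(P 0, P (n-2)) ∈ E1 ∪ E2 := by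
      rcases Nat.even_or_odd n with hp | hp
      · exact Or.inl (Or.inr (Or.inl ⟨Nat.even_iff.mp hp, rfl⟩))
      · exact Or.inr (Or.inr (Or.inr ⟨Nat.odd_iff.mp hp, Or.inl rfl⟩))
    have hkey : ∀ i j, i < n → j < n → R i → R j → reach i j := by
      apply conn_core n h6 R reach m1 m2 m3 hcover hrefl hsymm htrans
      · intro i h hRi hRj
        exact hadj i (i+1) (by omega) h (by omega) hRi hRj (me1 i h)
      · intro i h hRi hRj
        exact hadj i (i+2) (by omega) h (by omega) hRi hRj (me2 i h)
      · intro hR1 hR2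
        exact hadj 0 (n-1) (by omega) (by omega) (by omega) hR1 hR2 me3
      · intro hR1 hR2
        exact hadj 0 (n-2) (by omega) (by omega) (by omega) hR1 hR2 me4
      · rcases Nat.even_or_odd n with hp | hp
        · left
          intro hR1 hR2
          exact hadj 1 (n-1) (by omega) (by omega) (by omega) hR1 hR2
            (Or.inr (Or.inr (Or.inl ⟨Nat.even_iff.mp hp, rfl⟩)))
        · right
          constructor
          · intro hR1 hR2
            exact hadj 1 (n-2) (by omega) (by omega) (by omega) hR1 hR2
              (Or.inr (Or.inr (Or.inr ⟨Nat.odd_iff.mp hp, Or.inr rfl⟩)))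
          · intro hR1 hR2
            exact hadj 2 (n-1) (by omega) (by omega) (by omega) hR1 hR2
              (Or.inl (Or.inr (Or.inr ⟨Nat.odd_iff.mp hp, rfl⟩)))
    -- nonempty vertex set
    have hvert : ∃ i, i < n ∧ P i ∉ C := by
      by_contra hc
      push_neg at hc
      have hsub : Finset.range n ⊆ Mf := by
        intro i hi
        rw [hMf, Finset.mem_filter]
        exact ⟨hi, hc i (Finset.mem_range.mp hi)⟩
      have := Finset.card_le_card hsub
      rw [Finset.card_range] at this
      omega
    obtain ⟨i0, hi0n, hi0⟩ := hvert
    rw [SimpleGraph.connected_iff]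
    constructor
    · intro u v
      obtain ⟨i, hin, hPi⟩ := hPsurj u.1 u.2.1
      obtain ⟨j, hjn, hPj⟩ := hPsurj v.1 v.2.1
      have hRi : R i := ⟨hin, by rw [hPi]; exact u.2.2⟩
      have hRj : R j := ⟨hjn, by rw [hPj]; exact v.2.2⟩
      obtain ⟨hi', hj', hr⟩ := hkey i j hin hjn hRi hRj
      have hu : u = ⟨P i, hi'⟩ := Subtype.ext hPi.symm
      have hv : v = ⟨P j, hj'⟩ := Subtype.ext hPj.symm
      rw [hu, hv]
      exact hr
    · exact ⟨⟨P i0, hPmem i0 hi0n, hi0⟩⟩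

set_option maxHeartbeats 1000000 in
lemma not_five (S : Set Pt) (hfin : S.Finite) (hconv : InConvexPos S)
    (hcard : S.ncard = 5) (E : Set (Sym2 Pt)) (hB : IsBiplaneGraph S E)
    (hK : KConnected 4 S E) : False := by
  classical
  -- every pair is an edge (the graph must be complete)
  have hK5 : ∀ u v, u ∈ S → v ∈ S → u ≠ v → s(u, v) ∈ E := by
    intro u v hu hv huv
    set C : Set Pt := S \ {u, v} with hC
    have hsub : {u, v} ⊆ S := by
      intro x hx; rcases hx with rfl | rfl
      · exact hu
      · exact hv
    have hCcard : C.ncard = 3 := by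
      rw [hC, Set.ncard_diff hsub, hcard, Set.ncard_pair huv]
    have hconn := hK.2 C Set.diff_subset (by omega)
    have hSC : S \ C = {u, v} := by
      ext x
      simp only [hC, Set.mem_diff, Set.mem_insert_iff, Set.mem_singleton_iff]
      constructor
      · tauto
      · rintro (rfl | rfl)
        · exact ⟨hu, fun h => h.2 (Or.inl rfl)⟩
        · exact ⟨hv, fun h => h.2 (Or.inr rfl)⟩
    rw [hSC] at hconn
    have hu' : u ∈ ({u, v} : Set Pt) := Or.inl rfl
    have hv' : v ∈ ({u, v} : Set Pt) := Or.inr rfl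
    have hr := hconn.preconnected ⟨u, hu'⟩ ⟨v, hv'⟩
    obtain ⟨w⟩ := hr
    cases w with
    | nil => exact absurd rfl huv
    | cons h p =>
      rename_i x
      have hadj : (SimpleGraph.fromEdgeSet E).Adj u x.1 := h
      rw [SimpleGraph.fromEdgeSet_adj] at hadj
      have hxv : x.1 = v := by
        rcases x.2 with h' | h'
        · exact absurd h'.symm hadj.2
        · exact h'
      rw [hxv] at hadj
      exact hadj.1
  obtain ⟨P, hPmem, hPsurj, hPinj, hccw⟩ := exists_ccw hfin hconv hcard (by omega)
  have hpos : ∀ i j k, i < j → j < 5 → k < 5 → (k < i ∨ j < k) →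
      0 < det3 (P i) (P j) (P k) := by
    intro i j k hij hjn hkn hk
    rcases hk with hk | hk
    · rw [← det3_cycle]
      exact hccw k i j hk hij hjn
    · exact hccw i j k hij hk hkn
  have hneg : ∀ i j k, i < k → k < j → j < 5 → det3 (P i) (P j) (P k) < 0 := by
    intro i j k hik hkj hjn
    have := hccw i k j hik hkj hjn
    rw [det3_swap23] at this
    linarith
  have hcr : ∀ a b c d, a < b → b < c → c < d → d < 5 →
      Cross s(P a, P c) s(P b, P d) := by
    intro a b c d hab hbc hcd hd5
    apply cross_of_interleave
    · exact hneg a c b hab hbc (by omega)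
    · exact hpos a c d (by omega) (by omega) hd5 (Or.inr hcd)
    · exact hpos b d a (by omega) hd5 (by omega) (Or.inl hab)
    · exact hneg b d c hbc hcd hd5
  have hedist : ∀ a b c d, a < b → b < c → c < d → d < 5 →
      s(P a, P c) ≠ s(P b, P d) := by
    intro a b c d hab hbc hcd hd5 heq
    rw [Sym2.eq_iff] at heq
    rcases heq with ⟨h1, h2⟩ | ⟨h1, h2⟩
    · exact hPinj a b hab (by omega) h1
    · exact hPinj a d (by omega) hd5 h1
  obtain ⟨_, E1, E2, hEu, hpl1, hpl2⟩ := hB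
  have hmem : ∀ i j, i < j → j < 5 → s(P i, P j) ∈ E1 ∨ s(P i, P j) ∈ E2 := by
    intro i j hij hjn
    have h := hK5 (P i) (P j) (hPmem i (by omega)) (hPmem j hjn) (hPinj i j hij hjn)
    rw [hEu] at h
    exact h
  have hnc : ∀ (X : Set (Sym2 Pt)), IsPlaneGraph S X → ∀ a b c d,
      a < b → b < c → c < d → d < 5 →
      s(P a, P c) ∈ X → s(P b, P d) ∈ X → False := by
    intro X hX a b c d hab hbc hcd hd5 h1 h2
    exact hX.2 _ h1 _ h2 (hedist a b c d hab hbc hcd hd5) (hcr a b c d hab hbc hcd hd5)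
  have m1 := hmem 0 2 (by omega) (by omega)
  have m2 := hmem 1 3 (by omega) (by omega)
  have m3 := hmem 2 4 (by omega) (by omega)
  have m4 := hmem 0 3 (by omega) (by omega)
  have m5 := hmem 1 4 (by omega) (by omega)
  have c1a := fun h1 h2 => hnc E1 hpl1 0 1 2 3 (by omega) (by omega) (by omega) (by omega) h1 h2
  have c1b := fun h1 h2 => hnc E2 hpl2 0 1 2 3 (by omega) (by omega) (by omega) (by omega) h1 h2
  have c2a := fun h1 h2 => hnc E1 hpl1 1 2 3 4 (by omega) (by omega) (by omega) (by omega) h1 h2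
  have c2b := fun h1 h2 => hnc E2 hpl2 1 2 3 4 (by omega) (by omega) (by omega) (by omega) h1 h2
  have c3a := fun h1 h2 => hnc E1 hpl1 0 2 3 4 (by omega) (by omega) (by omega) (by omega) h1 h2
  have c3b := fun h1 h2 => hnc E2 hpl2 0 2 3 4 (by omega) (by omega) (by omega) (by omega) h1 h2
  have c4a := fun h1 h2 => hnc E1 hpl1 0 1 3 4 (by omega) (by omega) (by omega) (by omega) h1 h2
  have c4b := fun h1 h2 => hnc E2 hpl2 0 1 3 4 (by omega) (by omega) (by omega) (by omega) h1 h2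
  have c5a := fun h1 h2 => hnc E1 hpl1 0 1 2 4 (by omega) (by omega) (by omega) (by omega) h1 h2
  have c5b := fun h1 h2 => hnc E2 hpl2 0 1 2 4 (by omega) (by omega) (by omega) (by omega) h1 h2
  rcases m1 with h1 | h1 <;> rcases m2 with h2 | h2 <;> rcases m3 with h3 | h3 <;>
    rcases m4 with h4 | h4 <;> rcases m5 with h5 | h5
  all_goals first
    | exact c1a h1 h2 | exact c1b h1 h2
    | exact c2a h2 h3 | exact c2b h2 h3
    | exact c3a h4 h3 | exact c3b h4 h3
    | exact c4a h4 h5 | exact c4b h4 h5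
    | exact c5a h1 h5 | exact c5b h1 h5


/-- Let `S` be a set of `n` points in convex position. There exists a
4-connected biplane graph on `S` iff `n ≥ 6`. -/
theorem statement0 (n : ℕ) (S : Set Pt) (hfin : S.Finite) (hcard : S.ncard = n)
    (hconv : InConvexPos S) :
    (∃ E : Set (Sym2 Pt), IsBiplaneGraph S E ∧ KConnected 4 S E) ↔ 6 ≤ n := by
  constructor
  · rintro ⟨E, hB, hK⟩
    by_contra h
    push_neg at h
    have h5 : 4 < S.ncard := hK.1
    rw [hcard] at h5
    have hn5 : n = 5 := by omega
    exact not_five S hfin hconv (by rw [hcard, hn5]) E hB hK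
  · intro h6
    exact backward S hfin hconv n hcard h6
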